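/- For every integer n ≥ 1 and every real univariate polynomial f of degree at most 2n−1, the Gauss–Chebyshev–Lobatto quadrature formula is exact: ∫_{−1}^{1} f(x) w(x) dx = (1/n) ( (1/2) f(−1) + Σ_{j=1}^{n−1} f(cos(jπ/n)) + (1/2) f(1) ). -/

import Mathlib

open Real MeasureTheory Polynomial Polynomial.Chebyshev Set


lemma cos_image_Ioo : Real.cos '' Set.Ioo 0 π = Set.Ioo (-1 : ℝ) 1 := by
  apply Subset.antisymm
  · rintro y ⟨θ, hθ, rfl⟩
    constructor
    · have := Real.strictAntiOn_cos ⟨hθ.1.le, hθ.2.le⟩ ⟨pi_pos.le, le_refl π⟩ hθ.2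
      simpa using this
    · have := Real.strictAntiOn_cos ⟨le_refl (0:ℝ), pi_pos.le⟩ ⟨hθ.1.le, hθ.2.le⟩ hθ.1
      simpa using this
  · rintro y hy
    refine ⟨Real.arccos y, ⟨Real.arccos_pos.2 hy.2, ?_⟩, Real.cos_arccos hy.1.le hy.2.le⟩
    rcases lt_or_eq_of_le (Real.arccos_le_pi y) with h | h
    · exact h
    · exact absurd (Real.arccos_eq_pi.1 h) (by linarith [hy.1])

lemma subst_lemma (f : Polynomial ℝ) :
    ∫ x in Set.Ioo (-1 : ℝ) 1, f.eval x * (π * Real.sqrt (1 - x ^ 2))⁻¹ =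
      ∫ θ in Set.Ioo (0:ℝ) π, f.eval (Real.cos θ) / π := by
  rw [← cos_image_Ioo,
    MeasureTheory.integral_image_eq_integral_abs_deriv_smul measurableSet_Ioo
      (fun x _ => (Real.hasDerivAt_cos x).hasDerivWithinAt)
      (Real.injOn_cos.mono Set.Ioo_subset_Icc_self)]
  apply MeasureTheory.setIntegral_congr_fun measurableSet_Ioo
  intro θ hθ
  have hs : 0 < Real.sin θ := Real.sin_pos_of_pos_of_lt_pi hθ.1 hθ.2
  have h1 : Real.sqrt (1 - Real.cos θ ^ 2) = Real.sin θ := by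
    rw [show (1 : ℝ) - Real.cos θ ^ 2 = Real.sin θ ^ 2 by
      have := Real.sin_sq_add_cos_sq θ; linarith]
    exact Real.sqrt_sq hs.le
  show |(-Real.sin θ)| • (f.eval (Real.cos θ) * (π * Real.sqrt (1 - Real.cos θ ^ 2))⁻¹) = _
  rw [h1, abs_neg, abs_of_pos hs, smul_eq_mul]
  have hπ : (π:ℝ) ≠ 0 := Real.pi_ne_zero
  field_simp

lemma T_natDeg : ∀ n : ℕ, (T ℝ n).natDegree = n := by
  have key : ∀ n : ℕ, (T ℝ n).natDegree = n ∧ (T ℝ (n+1)).natDegree = n + 1 := by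
    intro n
    induction n with
    | zero => constructor <;> simp [T_zero, T_one]
    | succ m ih =>
      refine ⟨by exact_mod_cast ih.2, ?_⟩
      have hrec : T ℝ ((m:ℤ) + 1 + 1) = 2 * X * T ℝ ((m:ℤ) + 1) - T ℝ m := by
        have := T_add_two ℝ m
        convert this using 2 <;> push_cast <;> ring
      have h1 : (T ℝ ((m:ℤ)+1)).natDegree = m + 1 := ih.2
      have hne : T ℝ ((m:ℤ)+1) ≠ 0 := fun h => by simp [h] at h1
      have h2X : ((2 : Polynomial ℝ) * X).natDegree = 1 := by
        rw [show (2 : Polynomial ℝ) * X = C 2 * X by rw [map_ofNat]]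
        exact natDegree_C_mul_X 2 two_ne_zero
      have hmul : ((2 : Polynomial ℝ) * X * T ℝ ((m:ℤ)+1)).natDegree = m + 2 := by
        rw [natDegree_mul (by intro h; simp [h] at h2X) hne, h2X, h1]; ring
      have : (T ℝ ((m:ℤ)+1+1)).natDegree = m + 2 := by
        rw [hrec, natDegree_sub_eq_left_of_natDegree_lt]
        · exact hmul
        · rw [hmul, ih.1]; omega
      rw [show ((m:ℤ)+1+1) = ((m+2 : ℕ) : ℤ) by push_cast; ring] at this
      exact_mod_cast this
  exact fun n => (key n).1

lemma T_ne_zero (n : ℕ) : T ℝ n ≠ 0 := by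
  cases n with
  | zero => simp [T_zero]
  | succ m => intro h; have := T_natDeg (m+1); rw [h] at this; simp at this

lemma mem_span_T (m : ℕ) : ∀ f : Polynomial ℝ, f.natDegree ≤ m →
    f ∈ Submodule.span ℝ ((fun k : ℕ => T ℝ k) '' Set.Iic m) := by
  induction m with
  | zero =>
    intro f hf
    have : f = f.coeff 0 • T ℝ 0 := by
      rw [T_zero, eq_C_of_natDegree_le_zero hf]; simp [smul_eq_C_mul]
    rw [this]
    exact Submodule.smul_mem _ _ (Submodule.subset_span ⟨0, Set.mem_Iic.2 le_rfl, rfl⟩)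
  | succ d ih =>
    intro f hf
    by_cases hd : f.natDegree ≤ d
    · exact Submodule.span_mono (Set.image_mono (Set.Iic_subset_Iic.2 (Nat.le_succ d))) (ih f hd)
    · have hdeg : f.natDegree = d + 1 := le_antisymm hf (by omega)
      set c : ℝ := f.leadingCoeff / (T ℝ ((d+1:ℕ):ℤ)).leadingCoeff with hc
      set g : Polynomial ℝ := f - c • T ℝ ((d+1 : ℕ) : ℤ) with hg
      have hTlc : (T ℝ ((d+1:ℕ):ℤ)).leadingCoeff ≠ 0 := leadingCoeff_ne_zero.2 (T_ne_zero (d+1))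
      have hgdeg : g.natDegree ≤ d := by
        apply natDegree_le_iff_coeff_eq_zero.2
        intro N hN
        rcases eq_or_lt_of_le (Nat.succ_le_of_lt hN) with h | h
        · rw [hg, coeff_sub, coeff_smul, ← h]
          have h1 : f.coeff (d+1) = f.leadingCoeff := by rw [← hdeg]; rfl
          have h2 : (T ℝ ((d+1:ℕ):ℤ)).coeff (d+1) = (T ℝ ((d+1:ℕ):ℤ)).leadingCoeff := by
            rw [leadingCoeff, T_natDeg]
          rw [h1, h2, smul_eq_mul, hc, div_mul_cancel₀ _ hTlc, sub_self]
        · rw [hg, coeff_sub, coeff_smul,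
            coeff_eq_zero_of_natDegree_lt (by rw [hdeg]; exact h),
            coeff_eq_zero_of_natDegree_lt (by rw [T_natDeg]; exact h)]
          simp
      have : f = g + c • T ℝ ((d+1:ℕ):ℤ) := by rw [hg]; ring
      rw [this]
      exact Submodule.add_mem _
        (Submodule.span_mono (Set.image_mono (Set.Iic_subset_Iic.2 (Nat.le_succ d))) (ih g hgdeg))
        (Submodule.smul_mem _ _ (Submodule.subset_span ⟨d+1, Set.mem_Iic.2 le_rfl, rfl⟩))

lemma sum_cos_eq (n k : ℕ) (hn : 1 ≤ n) (hk1 : 1 ≤ k) (hk2 : k < 2*n) :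
    ∑ j ∈ Finset.range n, Real.cos ((j:ℝ) * ((k:ℝ) * π / n)) = (1 - (-1:ℝ)^k)/2 := by
  have hnR : (0:ℝ) < n := by exact_mod_cast hn
  have hnC : ((n:ℂ)) ≠ 0 := by exact_mod_cast hnR.ne'
  set θ : ℝ := (k:ℝ) * π / n with hθdef
  have hθpos : 0 < θ := div_pos (mul_pos (by exact_mod_cast hk1) pi_pos) hnR
  have hθlt : θ < 2 * π := by
    rw [hθdef, div_lt_iff₀ hnR]
    have : (k:ℝ) < 2*n := by exact_mod_cast hk2
    nlinarith [pi_pos]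
  set z : ℂ := Complex.exp (θ * Complex.I) with hz
  have hzj : ∀ j : ℕ, z ^ j = Complex.exp ((j:ℝ) * θ * Complex.I) := by
    intro j
    rw [hz, ← Complex.exp_nat_mul]
    push_cast
    ring_nf
  have hre : ∀ j : ℕ, (z ^ j).re = Real.cos ((j:ℝ) * θ) := by
    intro j
    rw [hzj j, show ((j:ℝ) * θ : ℂ) * Complex.I = ((((j:ℝ)*θ : ℝ)):ℂ) * Complex.I by push_cast; ring,
      Complex.exp_ofReal_mul_I_re]
  have hzn : z ^ n = (-1:ℂ)^k := by
    rw [hzj n, show ((n:ℝ) * θ : ℂ) * Complex.I = (k:ℂ) * (π * Complex.I) by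
      rw [hθdef]; push_cast; field_simp]
    rw [Complex.exp_nat_mul, Complex.exp_pi_mul_I]
  have hz1 : z ≠ 1 := by
    intro h
    rw [hz, Complex.exp_eq_one_iff] at h
    obtain ⟨m, hm⟩ := h
    have hC : (θ:ℂ) = (m:ℂ) * (2*(π:ℂ)) :=
      mul_right_cancel₀ Complex.I_ne_zero (by linear_combination hm)
    have hθm : θ = (m:ℝ) * (2*π) := by exact_mod_cast hC
    have h0 : (0:ℝ) < (m:ℝ) * (2*π) := hθm ▸ hθpos
    have h2 : (m:ℝ) * (2*π) < 2*π := hθm ▸ hθlt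
    have hmpos : (0:ℤ) < m := by exact_mod_cast (by nlinarith [pi_pos] : (0:ℝ) < m)
    have hmlt : (m:ℤ) < 1 := by exact_mod_cast (by nlinarith [pi_pos] : (m:ℝ) < 1)
    omega
  have hgeom : (∑ j ∈ Finset.range n, z ^ j) * (z - 1) = z ^ n - 1 := geom_sum_mul z n
  have key : (∑ j ∈ Finset.range n, z ^ j).re = (1 - (-1:ℝ)^k)/2 := by
    rcases Nat.even_or_odd k with hk | hk
    · have hsum0 : (∑ j ∈ Finset.range n, z ^ j) = 0 := by
        have h2 : (∑ j ∈ Finset.range n, z ^ j) * (z - 1) = 0 := by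
          rw [hgeom, hzn, hk.neg_one_pow, sub_self]
        exact (mul_eq_zero.1 h2).resolve_right (sub_ne_zero.2 hz1)
      rw [hsum0, hk.neg_one_pow, Complex.zero_re]
      norm_num
    · -- odd case
      have hsum : (∑ j ∈ Finset.range n, z ^ j) = (-2) / (z - 1) := by
        rw [eq_div_iff (sub_ne_zero.2 hz1), hgeom, hzn, hk.neg_one_pow]
        ring
      have hcos1 : Real.cos θ ≠ 1 := by
        intro h
        obtain ⟨m, hm⟩ := (Real.cos_eq_one_iff θ).1 h
        have hmpos : (0:ℤ) < m := by exact_mod_cast (by nlinarith [pi_pos, hθpos, hm] : (0:ℝ) < m)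
        have hmlt : (m:ℤ) < 1 := by exact_mod_cast (by nlinarith [pi_pos, hθlt, hm] : (m:ℝ) < 1)
        omega
      have hzre : z.re = Real.cos θ := by
        rw [hz, Complex.exp_ofReal_mul_I_re]
      have hzim : z.im = Real.sin θ := by
        rw [hz]
        simpa using Complex.exp_ofReal_mul_I_im θ
      rw [hsum, Complex.div_re]
      have hnormSq : Complex.normSq (z - 1) = 2 - 2 * Real.cos θ := by
        rw [Complex.normSq_apply]
        simp only [Complex.sub_re, Complex.sub_im, Complex.one_re, Complex.one_im, hzre, hzim]
        nlinarith [Real.sin_sq_add_cos_sq θ]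
      rw [hnormSq]
      simp only [Complex.sub_re, Complex.sub_im, Complex.one_re, Complex.one_im, hzre, hzim]
      rw [hk.neg_one_pow]
      have hc : 2 - 2 * Real.cos θ ≠ 0 := by
        intro h
        apply hcos1
        linarith
      norm_num
      field_simp
      ring
  rw [← key, Complex.re_sum]
  apply Finset.sum_congr rfl
  intro j _
  rw [hre j, hθdef]

noncomputable def Pquad (n : ℕ) (f : Polynomial ℝ) : Prop :=
  (∫ θ in Set.Ioo (0:ℝ) π, f.eval (Real.cos θ)) =
    (π/n) * ((1/2) * f.eval (-1) +
      (∑ j ∈ Finset.Ico 1 n, f.eval (Real.cos ((j:ℝ) * π / n))) + (1/2) * f.eval 1)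

lemma int_Ioo_eq_interval (g : ℝ → ℝ) :
    (∫ θ in Set.Ioo (0:ℝ) π, g θ) = ∫ θ in (0:ℝ)..π, g θ := by
  rw [intervalIntegral.integral_of_le pi_pos.le, MeasureTheory.integral_Ioc_eq_integral_Ioo]

lemma int_cos_k (k : ℕ) (hk : 1 ≤ k) :
    (∫ θ in Set.Ioo (0:ℝ) π, Real.cos ((k:ℝ) * θ)) = 0 := by
  rw [int_Ioo_eq_interval]
  have hkne : ((k:ℝ)) ≠ 0 := by positivity
  rw [intervalIntegral.integral_comp_mul_left Real.cos hkne]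
  simp [Real.sin_nat_mul_pi]

lemma T_eval_one (k : ℕ) : (T ℝ k).eval 1 = 1 := by
  have := Polynomial.Chebyshev.T_real_cos 0 (k : ℤ)
  simpa using this

lemma T_eval_neg_one (k : ℕ) : (T ℝ k).eval (-1) = (-1:ℝ)^k := by
  have := Polynomial.Chebyshev.T_real_cos π (k : ℤ)
  rw [Real.cos_pi] at this
  rw [this]
  have := Real.cos_nat_mul_pi_sub 0 k
  simpa using this

lemma Pquad_T (n k : ℕ) (hn : 1 ≤ n) (hk : k ≤ 2*n - 1) : Pquad n (T ℝ k) := by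
  have hnR : (0:ℝ) < n := by exact_mod_cast hn
  unfold Pquad
  rcases Nat.eq_zero_or_pos k with rfl | hk1
  · rw [Nat.cast_zero, T_zero]
    simp only [Polynomial.eval_one]
    rw [MeasureTheory.setIntegral_const]
    rw [MeasureTheory.measureReal_def, Real.volume_Ioo]
    rw [Finset.sum_const, Nat.card_Ico]
    simp only [smul_eq_mul, nsmul_eq_mul, mul_one]
    rw [sub_zero, ENNReal.toReal_ofReal pi_pos.le]
    have h1 : ((n - 1 : ℕ) : ℝ) = (n:ℝ) - 1 := by
      push_cast [hn]; ring
    rw [h1]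
    field_simp
    ring
  · have hk2 : k < 2*n := by omega
    have hevalθ : ∀ θ : ℝ, (T ℝ k).eval (Real.cos θ) = Real.cos ((k:ℝ) * θ) := by
      intro θ
      have := Polynomial.Chebyshev.T_real_cos θ (k : ℤ)
      rw [this]; norm_num
    have hL : (∫ θ in Set.Ioo (0:ℝ) π, (T ℝ k).eval (Real.cos θ)) = 0 := by
      rw [show (fun θ => (T ℝ (k:ℤ)).eval (Real.cos θ)) = fun θ => Real.cos ((k:ℝ)*θ) from
        funext hevalθ]
      exact int_cos_k k hk1
    rw [hL, _root_.T_eval_one, _root_.T_eval_neg_one]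
    have hsum : ∑ j ∈ Finset.Ico 1 n, (T ℝ (k:ℤ)).eval (Real.cos ((j:ℝ) * π / n)) =
        ∑ j ∈ Finset.Ico 1 n, Real.cos ((j:ℝ) * ((k:ℝ) * π / n)) := by
      apply Finset.sum_congr rfl
      intro j _
      rw [hevalθ]
      ring_nf
    rw [hsum]
    have hrange := sum_cos_eq n k hn hk1 hk2
    have hsplit : ∑ j ∈ Finset.range n, Real.cos ((j:ℝ) * ((k:ℝ) * π / n)) =
        1 + ∑ j ∈ Finset.Ico 1 n, Real.cos ((j:ℝ) * ((k:ℝ) * π / n)) := by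
      rw [Finset.range_eq_Ico, Finset.sum_eq_sum_Ico_succ_bot hn]
      norm_num
    have : ∑ j ∈ Finset.Ico 1 n, Real.cos ((j:ℝ) * ((k:ℝ) * π / n)) = (1 - (-1:ℝ)^k)/2 - 1 := by
      rw [← hrange, hsplit]; ring
    rw [this]
    ring

lemma intOn (f : Polynomial ℝ) :
    IntegrableOn (fun θ => f.eval (Real.cos θ)) (Set.Ioo (0:ℝ) π) volume :=
  ((f.continuous_aeval).comp Real.continuous_cos).integrableOn_Icc.mono_set
    Set.Ioo_subset_Icc_self

lemma Pquad_add (n : ℕ) (f g : Polynomial ℝ) (hf : Pquad n f) (hg : Pquad n g) :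
    Pquad n (f + g) := by
  unfold Pquad at *
  have h : (fun θ => (f+g).eval (Real.cos θ)) =
      fun θ => f.eval (Real.cos θ) + g.eval (Real.cos θ) := by
    funext θ; simp
  simp only [h]
  rw [MeasureTheory.integral_add (intOn f) (intOn g), hf, hg]
  simp only [Polynomial.eval_add, Finset.sum_add_distrib]
  ring

lemma Pquad_smul (n : ℕ) (c : ℝ) (f : Polynomial ℝ) (hf : Pquad n f) : Pquad n (c • f) := by
  unfold Pquad at *
  have h : (fun θ => (c • f).eval (Real.cos θ)) = fun θ => c * f.eval (Real.cos θ) := by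
    funext θ; simp
  simp only [h]
  rw [MeasureTheory.integral_const_mul, hf]
  simp only [Polynomial.eval_smul, smul_eq_mul, ← Finset.mul_sum]
  ring

lemma Pquad_zero (n : ℕ) : Pquad n 0 := by
  unfold Pquad; simp

/-- Gauss–Chebyshev–Lobatto quadrature: for every `n ≥ 1` and every real polynomial `f`
of degree at most `2n - 1`,
`∫_{-1}^{1} f(x)/(π√(1-x²)) dx = (1/n) ((1/2) f(-1) + ∑_{j=1}^{n-1} f(cos(jπ/n)) + (1/2) f(1))`. -/
theorem gauss_chebyshev_lobatto_quadrature (n : ℕ) (hn : 1 ≤ n)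
    (f : Polynomial ℝ) (hf : f.natDegree ≤ 2 * n - 1) :
    ∫ x in Set.Ioo (-1 : ℝ) 1, f.eval x * (π * Real.sqrt (1 - x ^ 2))⁻¹ =
      (1 / (n : ℝ)) *
        ((1 / 2) * f.eval (-1) +
          (∑ j ∈ Finset.Ico 1 n, f.eval (Real.cos ((j : ℝ) * π / n))) +
          (1 / 2) * f.eval 1) := by
  rw [subst_lemma]
  have hspan := mem_span_T (2*n-1) f hf
  have hP : Pquad n f := by
    refine Submodule.span_induction (p := fun q _ => Pquad n q) (fun q hq => ?_)
      (Pquad_zero n) (fun a b _ _ ha hb => Pquad_add n a b ha hb)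
      (fun c q _ hc => Pquad_smul n c q hc) hspan
    obtain ⟨k, hk, rfl⟩ := hq
    exact Pquad_T n k hn (Set.mem_Iic.1 hk)
  unfold Pquad at hP
  rw [MeasureTheory.integral_div, hP]
  have hnR : ((n:ℝ)) ≠ 0 := by
    have : (0:ℝ) < n := by exact_mod_cast hn
    exact this.ne'
  field_simp
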